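/- Let r ≥ 2 be an integer, C > 1 a real number, and ε' a real number with 0 < ε' ≤ C^{−3}·6^{−r}. There exists n₀ ∈ ℕ (depending on r, C, ε') such that the following holds. Let X_1, …, X_r be pairwise disjoint finite sets, each of size at least n₀, with |X_1| ≥ |X_2| ≥ … ≥ |X_r| and 1/C ≤ |X_i|/|X_j| ≤ C for all i, j ∈ [r]. Suppose every pair {u, v} with u ∈ X_i, v ∈ X_j, i ≠ j, is colored yellow, pink, or white in such a way that: (i) for all 1 ≤ j < i ≤ r, every v ∈ X_i is joined by pink edges to at most (1/(r−1) − ε'·C³/(r−1))·|X_j| vertices of X_j; and (ii) the total number of yellow edges is at most ε'·6^{−r}·Σ_{1 ≤ i < j ≤ r} |X_i|·|X_j|. Then there exist vertices x_1 ∈ X_1, …, x_r ∈ X_r such that every pair {x_i, x_j}, i ≠ j, is colored white. -/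

import Mathlib

open Finset

private lemma two_r4_lt_six_pow : ∀ r : ℕ, 2 ≤ r → 2 * r ^ 4 < 6 ^ r := by
  intro r hr
  induction r with
  | zero => omega
  | succ n ih =>
    rcases Nat.lt_or_ge n 2 with h | h
    · interval_cases n
      · omega
      · norm_num
    · have h1 := ih h
      have h4 : (2 * (n + 1)) ^ 4 ≤ (3 * n) ^ 4 :=
        Nat.pow_le_pow_left (by omega) 4
      have h5 : 16 * (n + 1) ^ 4 ≤ 81 * n ^ 4 := by
        calc 16 * (n + 1) ^ 4 = (2 * (n + 1)) ^ 4 := by ring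
          _ ≤ (3 * n) ^ 4 := h4
          _ = 81 * n ^ 4 := by ring
      have hb : 0 < n ^ 4 := Nat.pow_pos (by omega)
      have h2 : 2 * (n + 1) ^ 4 ≤ 6 * (2 * n ^ 4) := by linarith
      calc 2 * (n + 1) ^ 4 ≤ 6 * (2 * n ^ 4) := h2
        _ < 6 * 6 ^ n := by linarith
        _ = 6 ^ (n + 1) := by ring

/-- candidate set: vertices of `X j` that are white to all already-chosen vertices
(those with index `≥ t`). -/
def Yset {α : Type} [DecidableEq α] {r : ℕ} (X : Fin r → Finset α)
    (c : Sym2 α → Fin 3) (x : Fin r → α) (t : ℕ) (j : Fin r) : Finset α :=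
  (X j).filter (fun u => ∀ i : Fin r, t ≤ (i : ℕ) → c s(x i, u) = 2)

set_option maxHeartbeats 2000000 in
/-- the yellow/pink/white lemma. Colors of pairs are given by
`c : Sym2 α → Fin 3`, with yellow = 0, pink = 1, white = 2. -/
theorem yellow_pink_white (r : ℕ) (hr : 2 ≤ r) (C : ℝ) (hC : 1 < C)
    (ε : ℝ) (hε0 : 0 < ε) (hε1 : ε ≤ C ^ (-3 : ℤ) * (6 : ℝ) ^ (-(r : ℤ))) :
    ∃ n₀ : ℕ, ∀ (α : Type) [DecidableEq α] (X : Fin r → Finset α),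
      (∀ i j : Fin r, i ≠ j → Disjoint (X i) (X j)) →
      (∀ i : Fin r, n₀ ≤ (X i).card) →
      (∀ i j : Fin r, i ≤ j → (X j).card ≤ (X i).card) →
      (∀ i j : Fin r, ((X i).card : ℝ) ≤ C * ((X j).card : ℝ)) →
      ∀ c : Sym2 α → Fin 3,
      (∀ i j : Fin r, j < i → ∀ v ∈ X i,
        ((((X j).filter (fun u => c s(v, u) = 1)).card : ℝ)
          ≤ (1 / ((r : ℝ) - 1) - ε * C ^ 3 / ((r : ℝ) - 1)) * ((X j).card : ℝ))) →
      ((∑ p ∈ Finset.univ.filter (fun p : Fin r × Fin r => p.1 < p.2),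
          ((((X p.1) ×ˢ (X p.2)).filter (fun q => c s(q.1, q.2) = 0)).card : ℝ))
        ≤ ε * (6 : ℝ) ^ (-(r : ℤ)) *
            ∑ p ∈ Finset.univ.filter (fun p : Fin r × Fin r => p.1 < p.2),
              ((X p.1).card : ℝ) * ((X p.2).card : ℝ)) →
      ∃ x : Fin r → α, (∀ i, x i ∈ X i) ∧ ∀ i j : Fin r, i ≠ j → c s(x i, x j) = 2 := by
  classical
  refine ⟨1, ?_⟩
  intro α _ X hdisj hcard hmono hratio c hpink hyellow
  have hC0 : (0:ℝ) < C := by linarith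
  have hr1 : (1:ℝ) ≤ (r:ℝ) - 1 := by
    have : (2:ℝ) ≤ (r:ℝ) := by exact_mod_cast hr
    linarith
  have hR : (0:ℝ) < (r:ℝ) - 1 := by linarith
  set δ : ℝ := ε * C ^ 3 with hδdef
  have hδ0 : 0 < δ := by positivity
  have h6pos : (0:ℝ) < (6:ℝ) ^ r := by positivity
  have h6inv : (6:ℝ) ^ (-(r:ℤ)) = ((6:ℝ) ^ r)⁻¹ := by
    rw [zpow_neg, zpow_natCast]
  have hδ6 : δ ≤ ((6:ℝ) ^ r)⁻¹ := by
    have h1 : ε * C ^ 3 ≤ (C ^ (-3:ℤ) * (6:ℝ) ^ (-(r:ℤ))) * C ^ 3 := by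
      apply mul_le_mul_of_nonneg_right hε1 (by positivity)
    have h2 : (C ^ (-3:ℤ) * (6:ℝ) ^ (-(r:ℤ))) * C ^ 3 = ((6:ℝ) ^ r)⁻¹ := by
      rw [h6inv, zpow_neg]
      field_simp
    rw [hδdef, ← h2]; exact h1
  have h6big : 2 * (r:ℝ)^2 * ((r:ℝ)-1)^2 < (6:ℝ)^r := by
    have hn := two_r4_lt_six_pow r hr
    have hcast : (2 * r ^ 4 : ℝ) < (6:ℝ) ^ r := by exact_mod_cast hn
    have : (0:ℝ) ≤ (r:ℝ) := by positivity
    nlinarith [sq_nonneg ((r:ℝ) - 1), sq_nonneg (r:ℝ)]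
  -- the main greedy induction
  have key : ∀ k : ℕ, k ≤ r → ∃ x : Fin r → α,
      (∀ i : Fin r, r - k ≤ (i:ℕ) → x i ∈ X i) ∧
      (∀ i j : Fin r, r - k ≤ (i:ℕ) → r - k ≤ (j:ℕ) → i ≠ j → c s(x i, x j) = 2) ∧
      (∀ j : Fin r, (j:ℕ) < r - k →
        (1 - (k:ℝ) * (1 - δ/2) / ((r:ℝ)-1)) * ((X j).card : ℝ)
          ≤ ((Yset X c x (r-k) j).card : ℝ)) := by
    intro k
    induction k with
    | zero =>
      intro _
      have h0r : 0 < r := by omega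
      obtain ⟨a₀, ha₀⟩ : (X ⟨0, h0r⟩).Nonempty := card_pos.mp (by have := hcard ⟨0, h0r⟩; omega)
      refine ⟨fun _ => a₀, ?_, ?_, ?_⟩
      · intro i hi; exact absurd i.isLt (by omega)
      · intro i j hi _ _; exact absurd i.isLt (by omega)
      · intro j hj
        have hY : Yset X c (fun _ => a₀) (r - 0) j = X j := by
          apply filter_eq_self.mpr
          intro u _ i hi
          exact absurd i.isLt (by omega)
        rw [hY]
        push_cast
        norm_num
    | succ k ih =>
      intro hk1
      have hkr : k < r := by omega
      obtain ⟨x, hx1, hx2, hx3⟩ := ih (by omega)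
      set θ : ℝ := δ / (2 * ((r:ℝ) - 1)) with hθdef
      have hθ0 : 0 < θ := by positivity
      have hik : r - k - 1 < r := by omega
      set i₀ : Fin r := ⟨r - k - 1, hik⟩ with hi₀
      have hi₀v : (i₀ : ℕ) = r - k - 1 := rfl
      set B : Finset α := (X i₀).filter (fun v => ∃ j : Fin r, (j:ℕ) < (i₀:ℕ) ∧
        θ * ((X j).card : ℝ) < (((X j).filter (fun u => c s(v, u) = 0)).card : ℝ)) with hBdef
      set Yi : Finset α := Yset X c x (r - k) i₀ with hYidef
      have hYiX : Yi ⊆ X i₀ := filter_subset _ _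
      have hYi_lb : (1 - (k:ℝ) * (1 - δ/2) / ((r:ℝ)-1)) * ((X i₀).card : ℝ) ≤ (Yi.card : ℝ) :=
        hx3 i₀ (by omega)
      -- bound on each bad set
      have hBj : ∀ j : Fin r, (j:ℕ) < (i₀:ℕ) →
          ((((X i₀).filter (fun v => θ * ((X j).card : ℝ) < (((X j).filter (fun u => c s(v, u) = 0)).card : ℝ))).card : ℝ)
            ≤ 2 * ((r:ℝ)-1) * (r:ℝ)^2 * ((6:ℝ)^r)⁻¹ * ((X i₀).card : ℝ)) := by
        intro j hj
        set Bj : Finset α := (X i₀).filter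
          (fun v => θ * ((X j).card : ℝ) < (((X j).filter (fun u => c s(v, u) = 0)).card : ℝ)) with hBjdef
        have ha : (Bj.card : ℝ) * (θ * ((X j).card : ℝ))
            ≤ ∑ v ∈ Bj, (((X j).filter (fun u => c s(v, u) = 0)).card : ℝ) := by
          have := Finset.card_nsmul_le_sum Bj
            (fun v => (((X j).filter (fun u => c s(v, u) = 0)).card : ℝ))
            (θ * ((X j).card : ℝ))
            (fun v hv => le_of_lt (mem_filter.mp hv).2)
          simpa [nsmul_eq_mul] using this
        have hb : ∑ v ∈ Bj, (((X j).filter (fun u => c s(v, u) = 0)).card : ℝ)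
            ≤ ∑ v ∈ X i₀, (((X j).filter (fun u => c s(v, u) = 0)).card : ℝ) :=
          Finset.sum_le_sum_of_subset_of_nonneg (filter_subset _ _) (fun _ _ _ => by positivity)
        have hcnt : ∑ v ∈ X i₀, ((X j).filter (fun u => c s(v, u) = 0)).card
            = ((X j ×ˢ X i₀).filter (fun q => c s(q.1, q.2) = 0)).card := by
          rw [Finset.card_eq_sum_card_fiberwise
            (f := Prod.snd) (t := X i₀)
            (fun q hq => (mem_product.mp (mem_filter.mp hq).1).2)]
          refine Finset.sum_congr rfl fun v hv => ?_
          have himg : ((X j ×ˢ X i₀).filter (fun q => c s(q.1, q.2) = 0)).filter (fun q => q.2 = v)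
              = ((X j).filter (fun u => c s(v, u) = 0)).image (fun u => (u, v)) := by
            ext q
            simp only [mem_filter, mem_product, mem_image]
            constructor
            · rintro ⟨⟨⟨hq1, hq2⟩, hq3⟩, hq4⟩
              refine ⟨q.1, ⟨hq1, ?_⟩, ?_⟩
              · rw [Sym2.eq_swap, ← hq4]; exact hq3
              · exact Prod.ext rfl hq4.symm
            · rintro ⟨u, ⟨hu1, hu2⟩, hq⟩
              rw [← hq]
              refine ⟨⟨⟨hu1, hv⟩, ?_⟩, rfl⟩
              rw [Sym2.eq_swap]; exact hu2
          rw [himg, Finset.card_image_of_injective]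
          intro a b hab
          exact (Prod.mk.injEq _ _ _ _).mp hab |>.1
        have hcntR : ∑ v ∈ X i₀, (((X j).filter (fun u => c s(v, u) = 0)).card : ℝ)
            = (((X j ×ˢ X i₀).filter (fun q => c s(q.1, q.2) = 0)).card : ℝ) := by
          exact_mod_cast congrArg (fun n : ℕ => (n:ℝ)) hcnt
        have hd : (((X j ×ˢ X i₀).filter (fun q => c s(q.1, q.2) = 0)).card : ℝ)
            ≤ ε * (6:ℝ) ^ (-(r:ℤ)) * ∑ p ∈ univ.filter (fun p : Fin r × Fin r => p.1 < p.2),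
                ((X p.1).card : ℝ) * ((X p.2).card : ℝ) := by
          refine le_trans ?_ hyellow
          have hmem : ((j, i₀) : Fin r × Fin r) ∈ univ.filter (fun p : Fin r × Fin r => p.1 < p.2) := by
            simp only [mem_filter, mem_univ, true_and]
            exact Fin.lt_def.mpr hj
          have hsingle := Finset.single_le_sum (f := fun p : Fin r × Fin r =>
              ((((X p.1) ×ˢ (X p.2)).filter (fun q => c s(q.1, q.2) = 0)).card : ℝ))
            (fun p _ => by positivity) hmem
          simpa using hsingle
        have hS : ∑ p ∈ univ.filter (fun p : Fin r × Fin r => p.1 < p.2),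
            ((X p.1).card : ℝ) * ((X p.2).card : ℝ)
            ≤ ((r:ℝ) * (r:ℝ)) * (C * ((X j).card : ℝ) * (C * ((X i₀).card : ℝ))) := by
          have hterm : ∀ p ∈ univ.filter (fun p : Fin r × Fin r => p.1 < p.2),
              ((X p.1).card : ℝ) * ((X p.2).card : ℝ) ≤ C * ((X j).card : ℝ) * (C * ((X i₀).card : ℝ)) := by
            intro p _
            exact mul_le_mul (hratio p.1 j) (hratio p.2 i₀) (by positivity) (by positivity)
          have h2 := Finset.sum_le_card_nsmul _ _ _ hterm
          rw [nsmul_eq_mul] at h2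
          have hc2 : ((univ.filter (fun p : Fin r × Fin r => p.1 < p.2)).card : ℝ) ≤ (r:ℝ) * (r:ℝ) := by
            have h3 : (univ.filter (fun p : Fin r × Fin r => p.1 < p.2)).card
                ≤ (univ : Finset (Fin r × Fin r)).card := card_filter_le _ _
            have h4 : (univ : Finset (Fin r × Fin r)).card = r * r := by simp
            rw [h4] at h3
            exact_mod_cast h3
          have hnn : (0:ℝ) ≤ C * ((X j).card : ℝ) * (C * ((X i₀).card : ℝ)) := by positivity
          calc ∑ p ∈ univ.filter (fun p : Fin r × Fin r => p.1 < p.2),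
                ((X p.1).card : ℝ) * ((X p.2).card : ℝ)
              ≤ ((univ.filter (fun p : Fin r × Fin r => p.1 < p.2)).card : ℝ)
                  * (C * ((X j).card : ℝ) * (C * ((X i₀).card : ℝ))) := h2
            _ ≤ ((r:ℝ) * (r:ℝ)) * (C * ((X j).card : ℝ) * (C * ((X i₀).card : ℝ))) :=
                mul_le_mul_of_nonneg_right hc2 hnn
        -- combine the chain
        have hXj1 : (1:ℝ) ≤ ((X j).card : ℝ) := by exact_mod_cast hcard j
        have hXjpos : (0:ℝ) < ((X j).card : ℝ) := by linarith
        have hε6 : (0:ℝ) ≤ ε * (6:ℝ) ^ (-(r:ℤ)) := by positivity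
        have hchain : (Bj.card : ℝ) * (θ * ((X j).card : ℝ))
            ≤ ε * ((6:ℝ)^r)⁻¹ * (((r:ℝ) * (r:ℝ)) * (C * ((X j).card : ℝ) * (C * ((X i₀).card : ℝ)))) := by
          calc (Bj.card : ℝ) * (θ * ((X j).card : ℝ))
              ≤ ∑ v ∈ Bj, (((X j).filter (fun u => c s(v, u) = 0)).card : ℝ) := ha
            _ ≤ ∑ v ∈ X i₀, (((X j).filter (fun u => c s(v, u) = 0)).card : ℝ) := hb
            _ = (((X j ×ˢ X i₀).filter (fun q => c s(q.1, q.2) = 0)).card : ℝ) := hcntR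
            _ ≤ ε * (6:ℝ) ^ (-(r:ℤ)) * ∑ p ∈ univ.filter (fun p : Fin r × Fin r => p.1 < p.2),
                  ((X p.1).card : ℝ) * ((X p.2).card : ℝ) := hd
            _ ≤ ε * ((6:ℝ)^r)⁻¹ * (((r:ℝ) * (r:ℝ)) * (C * ((X j).card : ℝ) * (C * ((X i₀).card : ℝ)))) := by
                rw [← h6inv]
                exact mul_le_mul_of_nonneg_left hS hε6
        -- divide by θ * |X j| > 0
        have hposfac : (0:ℝ) < θ * ((X j).card : ℝ) := by positivity
        have hCC : C^2 ≤ C^3 := by nlinarith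
        have hrw1 : ε * ((6:ℝ)^r)⁻¹ * (((r:ℝ) * (r:ℝ)) * (C * ((X j).card : ℝ) * (C * ((X i₀).card : ℝ))))
            = (ε * ((6:ℝ)^r)⁻¹ * (r:ℝ)^2 * ((X j).card : ℝ) * ((X i₀).card : ℝ)) * C^2 := by ring
        have hrw2 : (2 * ((r:ℝ)-1) * (r:ℝ)^2 * ((6:ℝ)^r)⁻¹ * ((X i₀).card : ℝ)) * (θ * ((X j).card : ℝ))
            = (ε * ((6:ℝ)^r)⁻¹ * (r:ℝ)^2 * ((X j).card : ℝ) * ((X i₀).card : ℝ)) * C^3 := by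
          rw [hθdef, hδdef]
          field_simp
        have hfac : (0:ℝ) ≤ ε * ((6:ℝ)^r)⁻¹ * (r:ℝ)^2 * ((X j).card : ℝ) * ((X i₀).card : ℝ) := by positivity
        have hmul : (Bj.card : ℝ) * (θ * ((X j).card : ℝ))
            ≤ (2 * ((r:ℝ)-1) * (r:ℝ)^2 * ((6:ℝ)^r)⁻¹ * ((X i₀).card : ℝ)) * (θ * ((X j).card : ℝ)) := by
          rw [hrw2]
          calc (Bj.card : ℝ) * (θ * ((X j).card : ℝ))
              ≤ ε * ((6:ℝ)^r)⁻¹ * (((r:ℝ) * (r:ℝ)) * (C * ((X j).card : ℝ) * (C * ((X i₀).card : ℝ)))) := hchain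
            _ = (ε * ((6:ℝ)^r)⁻¹ * (r:ℝ)^2 * ((X j).card : ℝ) * ((X i₀).card : ℝ)) * C^2 := hrw1
            _ ≤ (ε * ((6:ℝ)^r)⁻¹ * (r:ℝ)^2 * ((X j).card : ℝ) * ((X i₀).card : ℝ)) * C^3 :=
                mul_le_mul_of_nonneg_left hCC hfac
        exact le_of_mul_le_mul_right hmul hposfac
      have hBbound : (B.card : ℝ) ≤ ((i₀:ℕ):ℝ) * (2 * ((r:ℝ)-1) * (r:ℝ)^2 * ((6:ℝ)^r)⁻¹ * ((X i₀).card : ℝ)) := by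
        have hBsub : B ⊆ (univ.filter (fun j : Fin r => j < i₀)).biUnion
            (fun j => (X i₀).filter (fun v => θ * ((X j).card : ℝ) < (((X j).filter (fun u => c s(v, u) = 0)).card : ℝ))) := by
          intro v hv
          obtain ⟨hvX, j, hjlt, hjdeg⟩ := mem_filter.mp hv
          exact mem_biUnion.mpr ⟨j, mem_filter.mpr ⟨mem_univ _, Fin.lt_def.mpr hjlt⟩,
            mem_filter.mpr ⟨hvX, hjdeg⟩⟩
        have hcount : (univ.filter (fun j : Fin r => j < i₀)).card = (i₀:ℕ) := by
          have hiio : univ.filter (fun j : Fin r => j < i₀) = Finset.Iio i₀ := by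
            ext j; simp [Finset.mem_Iio]
          rw [hiio, Fin.card_Iio]
        have h1 : B.card ≤ ∑ j ∈ univ.filter (fun j : Fin r => j < i₀),
            ((X i₀).filter (fun v => θ * ((X j).card : ℝ) < (((X j).filter (fun u => c s(v, u) = 0)).card : ℝ))).card :=
          le_trans (card_le_card hBsub) (Finset.card_biUnion_le)
        have h1R : (B.card : ℝ) ≤ ∑ j ∈ univ.filter (fun j : Fin r => j < i₀),
            (((X i₀).filter (fun v => θ * ((X j).card : ℝ) < (((X j).filter (fun u => c s(v, u) = 0)).card : ℝ))).card : ℝ) := by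
          exact_mod_cast h1
        have h2 : ∑ j ∈ univ.filter (fun j : Fin r => j < i₀),
            (((X i₀).filter (fun v => θ * ((X j).card : ℝ) < (((X j).filter (fun u => c s(v, u) = 0)).card : ℝ))).card : ℝ)
            ≤ (univ.filter (fun j : Fin r => j < i₀)).card • (2 * ((r:ℝ)-1) * (r:ℝ)^2 * ((6:ℝ)^r)⁻¹ * ((X i₀).card : ℝ)) := by
          apply Finset.sum_le_card_nsmul
          intro j hjmem
          exact hBj j (Fin.lt_def.mp (mem_filter.mp hjmem).2)
        rw [hcount, nsmul_eq_mul] at h2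
        linarith
      have hBlt : (B.card : ℝ) < (Yi.card : ℝ) := by
        have hXi1 : (1:ℝ) ≤ ((X i₀).card : ℝ) := by exact_mod_cast hcard i₀
        have hXipos : (0:ℝ) < ((X i₀).card : ℝ) := by linarith
        have hik2 : ((i₀:ℕ):ℝ) + (k:ℝ) = (r:ℝ) - 1 := by
          have h1 : (i₀:ℕ) + k + 1 = r := by omega
          have h2 : (((i₀:ℕ) + k + 1 : ℕ) : ℝ) = (r:ℝ) := by exact_mod_cast congrArg (fun n : ℕ => (n:ℝ)) h1
          push_cast at h2
          linarith
        have hcoeff : ((i₀:ℕ):ℝ) * (2 * ((r:ℝ)-1) * (r:ℝ)^2 * ((6:ℝ)^r)⁻¹)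
            < 1 - (k:ℝ) * (1 - δ/2) / ((r:ℝ)-1) := by
          have heq : 1 - (k:ℝ) * (1 - δ/2) / ((r:ℝ)-1)
              = (((i₀:ℕ):ℝ) + (k:ℝ) * δ / 2) / ((r:ℝ)-1) := by
            field_simp
            linarith [hik2]
          rcases Nat.eq_zero_or_pos (i₀:ℕ) with h0 | hpos
          · rw [heq, h0]
            have hkpos : (0:ℝ) < (k:ℝ) := by
              have : 1 ≤ k := by omega
              exact_mod_cast Nat.lt_of_lt_of_le Nat.zero_lt_one this
            have h7 : (0:ℝ) < (k:ℝ) * δ / 2 := by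
              have := mul_pos hkpos hδ0
              linarith
            push_cast
            simp only [zero_mul, zero_add]
            exact div_pos h7 hR
          · have hipos : (0:ℝ) < ((i₀:ℕ):ℝ) := by exact_mod_cast hpos
            have hx6 : 2 * ((r:ℝ)-1) * (r:ℝ)^2 * ((6:ℝ)^r)⁻¹ < 1 / ((r:ℝ)-1) := by
              rw [lt_div_iff₀ hR]
              have hre : 2 * ((r:ℝ)-1) * (r:ℝ)^2 * ((6:ℝ)^r)⁻¹ * ((r:ℝ)-1)
                  = (2 * (r:ℝ)^2 * ((r:ℝ)-1)^2) / ((6:ℝ)^r) := by ring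
              rw [hre, div_lt_one h6pos]
              exact h6big
            have h5 : ((i₀:ℕ):ℝ) * (2 * ((r:ℝ)-1) * (r:ℝ)^2 * ((6:ℝ)^r)⁻¹)
                < ((i₀:ℕ):ℝ) * (1 / ((r:ℝ)-1)) := by
              exact mul_lt_mul_of_pos_left hx6 hipos
            have h6 : ((i₀:ℕ):ℝ) * (1 / ((r:ℝ)-1)) ≤ (((i₀:ℕ):ℝ) + (k:ℝ) * δ / 2) / ((r:ℝ)-1) := by
              rw [mul_one_div]
              apply (div_le_div_iff_of_pos_right hR).mpr
              have : (0:ℝ) ≤ (k:ℝ) * δ / 2 := by positivity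
              linarith
            rw [heq]
            linarith
        calc (B.card : ℝ) ≤ ((i₀:ℕ):ℝ) * (2 * ((r:ℝ)-1) * (r:ℝ)^2 * ((6:ℝ)^r)⁻¹) * ((X i₀).card : ℝ) := by
              linarith [hBbound, mul_assoc (((i₀:ℕ):ℝ)) (2 * ((r:ℝ)-1) * (r:ℝ)^2 * ((6:ℝ)^r)⁻¹) (((X i₀).card : ℝ))]
          _ < (1 - (k:ℝ) * (1 - δ/2) / ((r:ℝ)-1)) * ((X i₀).card : ℝ) :=
              mul_lt_mul_of_pos_right hcoeff hXipos
          _ ≤ (Yi.card : ℝ) := hYi_lb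
      have hnonempty : (Yi \ B).Nonempty := by
        have hlt : B.card < Yi.card := by exact_mod_cast hBlt
        have hsd := Finset.le_card_sdiff B Yi
        rw [← card_pos]
        omega
      obtain ⟨v, hv⟩ := hnonempty
      have hvYi : v ∈ Yi := (mem_sdiff.mp hv).1
      have hvB : v ∉ B := (mem_sdiff.mp hv).2
      have hvX : v ∈ X i₀ := hYiX hvYi
      have hvwhite : ∀ i : Fin r, r - k ≤ (i:ℕ) → c s(x i, v) = 2 := (mem_filter.mp hvYi).2
      have hvyellow : ∀ j : Fin r, (j:ℕ) < (i₀:ℕ) →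
          (((X j).filter (fun u => c s(v, u) = 0)).card : ℝ) ≤ θ * ((X j).card : ℝ) := by
        intro j hj
        by_contra hcon
        exact hvB (mem_filter.mpr ⟨hvX, ⟨j, hj, lt_of_not_ge (fun h => hcon h)⟩⟩)
      set x' : Fin r → α := Function.update x i₀ v with hx'def
      have hx'i₀ : x' i₀ = v := Function.update_self _ _ _
      have hne : ∀ i : Fin r, r - k ≤ (i:ℕ) → i ≠ i₀ := by
        intro i hi hcon
        have : (i:ℕ) = r - k - 1 := by rw [hcon]
        omega
      have hx'old : ∀ i : Fin r, r - k ≤ (i:ℕ) → x' i = x i := fun i hi =>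
        Function.update_of_ne (hne i hi) _ _
      have hge : ∀ i : Fin r, r - (k+1) ≤ (i:ℕ) → i ≠ i₀ → r - k ≤ (i:ℕ) := by
        intro i hi hne'
        have hvne : (i:ℕ) ≠ (i₀:ℕ) := fun h => hne' (Fin.ext h)
        omega
      refine ⟨x', ?_, ?_, ?_⟩
      · intro i hi
        by_cases h : i = i₀
        · rw [h, hx'i₀]; exact hvX
        · rw [hx'old i (hge i hi h)]; exact hx1 i (hge i hi h)
      · intro i j hi hj hij
        by_cases h1 : i = i₀
        · have h2 : j ≠ i₀ := fun hcq => hij (by rw [h1, hcq])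
          rw [h1, hx'i₀, hx'old j (hge j hj h2), Sym2.eq_swap]
          exact hvwhite j (hge j hj h2)
        · by_cases h2 : j = i₀
          · rw [h2, hx'i₀, hx'old i (hge i hi h1)]
            exact hvwhite i (hge i hi h1)
          · rw [hx'old i (hge i hi h1), hx'old j (hge j hj h2)]
            exact hx2 i j (hge i hi h1) (hge j hj h2) hij
      · intro j hj
        have hj' : (j:ℕ) < (i₀:ℕ) := by omega
        set P : Finset α := (X j).filter (fun u => c s(v, u) = 1) with hPdef
        set Q : Finset α := (X j).filter (fun u => c s(v, u) = 0) with hQdef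
        have hsub : Yset X c x (r-k) j ⊆ (Yset X c x' (r-(k+1)) j) ∪ P ∪ Q := by
          intro u hu
          obtain ⟨huX, hu2⟩ := mem_filter.mp hu
          by_cases hp : c s(v, u) = 1
          · exact mem_union_left _ (mem_union_right _ (mem_filter.mpr ⟨huX, hp⟩))
          · by_cases hq : c s(v, u) = 0
            · exact mem_union_right _ (mem_filter.mpr ⟨huX, hq⟩)
            · have h2 : c s(v, u) = 2 := by
                have h0v : (c s(v, u)).val ≠ 0 := fun h => hq (Fin.ext (by simpa using h))
                have h1v : (c s(v, u)).val ≠ 1 := fun h => hp (Fin.ext (by simpa using h))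
                have hlt3 := (c s(v, u)).isLt
                apply Fin.ext
                simp only [Fin.val_two]
                omega
              refine mem_union_left _ (mem_union_left _ (mem_filter.mpr ⟨huX, ?_⟩))
              intro i hi
              by_cases hii : i = i₀
              · rw [hii, hx'i₀]; exact h2
              · rw [hx'old i (hge i hi hii)]; exact hu2 i (hge i hi hii)
        have hcards : (Yset X c x (r-k) j).card ≤ (Yset X c x' (r-(k+1)) j).card + P.card + Q.card := by
          have h1 := card_le_card hsub
          have h2 := card_union_le ((Yset X c x' (r-(k+1)) j) ∪ P) Q
          have h3 := card_union_le (Yset X c x' (r-(k+1)) j) P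
          omega
        have hcR : ((Yset X c x (r-k) j).card : ℝ) ≤ ((Yset X c x' (r-(k+1)) j).card : ℝ) + (P.card : ℝ) + (Q.card : ℝ) := by
          exact_mod_cast hcards
        have hP : (P.card : ℝ) ≤ (1 / ((r:ℝ) - 1) - δ / ((r:ℝ) - 1)) * ((X j).card : ℝ) :=
          hpink i₀ j (Fin.lt_def.mpr hj') v hvX
        have hQ : (Q.card : ℝ) ≤ θ * ((X j).card : ℝ) := hvyellow j hj'
        have hYold := hx3 j (by omega)
        have hid : (1 / ((r:ℝ)-1) - δ/((r:ℝ)-1)) * ((X j).card : ℝ) + θ * ((X j).card : ℝ)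
            = ((1 - δ/2)/((r:ℝ)-1)) * ((X j).card : ℝ) := by
          rw [hθdef]
          field_simp
          ring
        have hgoalid : (1 - ((k:ℝ)+1) * (1 - δ/2) / ((r:ℝ)-1)) * ((X j).card : ℝ)
            = (1 - (k:ℝ) * (1 - δ/2) / ((r:ℝ)-1)) * ((X j).card : ℝ)
              - ((1 - δ/2)/((r:ℝ)-1)) * ((X j).card : ℝ) := by
          ring
        push_cast
        linarith [hYold, hcR, hP, hQ, hid, hgoalid]
  obtain ⟨x, hx1, hx2, _⟩ := key r le_rfl
  exact ⟨x, fun i => hx1 i (by omega), fun i j hij => hx2 i j (by omega) (by omega) hij⟩
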